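/- Let 0 ≤ d ≤ n−1 be integers and φ : ℝ^n → ℝ a polynomial of total degree at most d. Then |φ(1,1,…,1)| ≤ 2^d · C(n,d) · max over Boolean inputs x ∈ {0,1}^n of Hamming weight at most d of |φ(x)|. -/

import Mathlib

open Finset MvPolynomial

private lemma alt_partial (m : ℕ) : ∀ k : ℕ, ∑ j ∈ Finset.range (k+1), (-1:ℝ)^j * ((m+1).choose j) = (-1)^k * (m.choose k) := by
  intro k
  induction k with
  | zero => simp
  | succ k ih =>
      rw [Finset.sum_range_succ, ih, Nat.choose_succ_succ (m) (k)]
      push_cast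
      ring

private lemma extrap_sum_supersets {ι : Type*} [DecidableEq ι] (S A : Finset ι) (hAS : A ⊆ S)
    (f : Finset ι → ℝ) :
    ∑ T ∈ S.powerset with A ⊆ T, f T = ∑ R ∈ (S \ A).powerset, f (A ∪ R) := by
  apply Finset.sum_nbij' (fun T => T \ A) (fun R => A ∪ R)
  · intro T hT
    simp only [mem_filter, mem_powerset] at hT
    exact mem_powerset.mpr (sdiff_subset_sdiff hT.1 (Finset.Subset.refl A))
  · intro R hR
    rw [mem_powerset, subset_sdiff] at hR
    simp only [mem_filter, mem_powerset]
    exact ⟨union_subset hAS hR.1, subset_union_left⟩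
  · intro T hT
    simp only [mem_filter, mem_powerset] at hT
    exact Finset.union_sdiff_of_subset hT.2
  · intro R hR
    rw [mem_powerset, subset_sdiff] at hR
    exact Finset.union_sdiff_cancel_left hR.2.symm
  · intro T hT
    simp only [mem_filter, mem_powerset] at hT
    rw [Finset.union_sdiff_of_subset hT.2]

private lemma extrap_inner_sum {ι : Type*} [DecidableEq ι] (S A : Finset ι) :
    ∑ T ∈ S.powerset with A ⊆ T, (-1:ℝ)^T.card = if A = S then (-1:ℝ)^S.card else 0 := by
  by_cases hAS : A ⊆ S
  · rw [extrap_sum_supersets S A hAS]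
    have hcard : ∀ R ∈ (S \ A).powerset, (-1:ℝ)^(A ∪ R).card = (-1)^A.card * (-1)^R.card := by
      intro R hR
      rw [mem_powerset, subset_sdiff] at hR
      rw [card_union_of_disjoint hR.2.symm, pow_add]
    rw [Finset.sum_congr rfl hcard, ← Finset.mul_sum]
    have h2 : ∑ m ∈ (S \ A).powerset, (-1 : ℝ) ^ m.card = if S \ A = ∅ then 1 else 0 := by
      have := Finset.sum_powerset_neg_one_pow_card (x := S \ A)
      exact_mod_cast congrArg (fun z : ℤ => (z : ℝ)) this
    rw [h2]
    rcases eq_or_ne A S with rfl | hne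
    · simp
    · have hSA : S \ A ≠ ∅ := by
        intro h
        exact hne (Finset.Subset.antisymm hAS (Finset.sdiff_eq_empty_iff_subset.mp h))
      simp [hne, hSA]
  · have hne : A ≠ S := fun h => hAS (h ▸ Finset.Subset.refl _)
    rw [if_neg hne]
    apply Finset.sum_eq_zero
    intro T hT
    simp only [mem_filter, mem_powerset] at hT
    exact absurd (hT.2.trans hT.1) hAS

private lemma extrap_eval_indicator {n : ℕ} (φ : MvPolynomial (Fin n) ℝ) (U : Finset (Fin n)) :
    MvPolynomial.eval (fun i => if i ∈ U then (1:ℝ) else 0) φ =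
      ∑ α ∈ φ.support, MvPolynomial.coeff α φ * (if α.support ⊆ U then (1:ℝ) else 0) := by
  rw [MvPolynomial.eval_eq]
  refine Finset.sum_congr rfl fun α _ => ?_
  congr 1
  by_cases h : α.support ⊆ U
  · rw [if_pos h]
    exact Finset.prod_eq_one fun i hi => by simp [h hi]
  · rw [if_neg h]
    obtain ⟨i, hi, hiU⟩ := Finset.not_subset.mp h
    refine Finset.prod_eq_zero hi ?_
    rw [if_neg hiU]
    exact zero_pow (Finsupp.mem_support_iff.mp hi)

private lemma extrap_card_support_le {n : ℕ} (φ : MvPolynomial (Fin n) ℝ) (α : (Fin n) →₀ ℕ)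
    (hα : α ∈ φ.support) : α.support.card ≤ φ.totalDegree := by
  refine le_trans ?_ (MvPolynomial.le_totalDegree hα)
  rw [Finsupp.sum, Finset.card_eq_sum_ones α.support]
  exact Finset.sum_le_sum fun i hi => Nat.one_le_iff_ne_zero.mpr (Finsupp.mem_support_iff.mp hi)

private lemma extrap_vanish {n d : ℕ} (φ : MvPolynomial (Fin n) ℝ) (hdeg : φ.totalDegree ≤ d)
    (S : Finset (Fin n)) (hS : d < S.card) :
    ∑ T ∈ S.powerset, (-1:ℝ)^T.card *
      MvPolynomial.eval (fun i => if i ∈ T then (1:ℝ) else 0) φ = 0 := by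
  simp_rw [extrap_eval_indicator φ, Finset.mul_sum]
  rw [Finset.sum_comm]
  refine Finset.sum_eq_zero fun α hα => ?_
  have h1 : ∀ T ∈ S.powerset, (-1:ℝ)^T.card * (MvPolynomial.coeff α φ *
      (if α.support ⊆ T then (1:ℝ) else 0)) =
      MvPolynomial.coeff α φ * (if α.support ⊆ T then (-1:ℝ)^T.card else 0) := by
    intro T _
    by_cases h : α.support ⊆ T <;> simp [h] <;> ring
  rw [Finset.sum_congr rfl h1, ← Finset.mul_sum, ← Finset.sum_filter,
    extrap_inner_sum S α.support]
  have hne : α.support ≠ S := by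
    intro h
    have := extrap_card_support_le φ α hα
    rw [h] at this
    omega
  rw [if_neg hne, mul_zero]

private lemma extrap_powerset_eq {ι : Type*} [Fintype ι] [DecidableEq ι] (T : Finset ι) :
    T.powerset = (Finset.univ : Finset ι).powerset.filter (· ⊆ T) := by
  ext U
  simp [Finset.subset_univ]

private lemma extrap_mobius {ι : Type*} [Fintype ι] [DecidableEq ι] (f : Finset ι → ℝ) :
    f Finset.univ = ∑ T ∈ (Finset.univ : Finset ι).powerset, (-1:ℝ)^T.card *
      ∑ U ∈ T.powerset, (-1:ℝ)^U.card * f U := by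
  have step : ∀ T : Finset ι, (-1:ℝ)^T.card * ∑ U ∈ T.powerset, (-1:ℝ)^U.card * f U
      = ∑ U ∈ (Finset.univ : Finset ι).powerset,
          (if U ⊆ T then (-1:ℝ)^T.card * ((-1:ℝ)^U.card * f U) else 0) := by
    intro T
    rw [extrap_powerset_eq T, Finset.sum_filter, Finset.mul_sum]
    refine Finset.sum_congr rfl fun U _ => ?_
    by_cases h : U ⊆ T <;> simp [h]
  simp_rw [step]
  rw [Finset.sum_comm]
  have inner : ∀ U : Finset ι,
      ∑ T ∈ (Finset.univ : Finset ι).powerset,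
        (if U ⊆ T then (-1:ℝ)^T.card * ((-1:ℝ)^U.card * f U) else 0)
      = ((-1:ℝ)^U.card * f U) * (if U = Finset.univ then (-1:ℝ)^(Finset.univ : Finset ι).card else 0) := by
    intro U
    rw [← extrap_inner_sum Finset.univ U, ← Finset.sum_filter, Finset.mul_sum]
    refine Finset.sum_congr rfl fun T _ => by ring
  simp_rw [inner]
  rw [Finset.sum_eq_single (Finset.univ : Finset ι)]
  · rw [if_pos rfl, mul_comm, ← mul_assoc, ← pow_add, ← two_mul, pow_mul, neg_one_sq, one_pow, one_mul]
  · intro U _ hU; rw [if_neg hU, mul_zero]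
  · intro h; exact absurd (Finset.mem_powerset.mpr (Finset.Subset.refl _)) h

private lemma extrap_coeff {n d : ℕ} (U : Finset (Fin n)) (hU : U.card ≤ d) (hd : d ≤ n - 1) (hn : 1 ≤ n) :
    ∑ T ∈ (Finset.univ : Finset (Fin n)).powerset with (T.card ≤ d ∧ U ⊆ T), (-1:ℝ)^T.card
      = (-1:ℝ)^U.card * ((-1:ℝ)^(d - U.card) * ((n - U.card - 1).choose (d - U.card))) := by
  have hu : U.card ≤ n := le_trans (Finset.card_le_card (Finset.subset_univ U)) (by simp)
  have key : ∑ T ∈ (Finset.univ : Finset (Fin n)).powerset with (T.card ≤ d ∧ U ⊆ T), (-1:ℝ)^T.card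
      = ∑ T ∈ (Finset.univ : Finset (Fin n)).powerset with U ⊆ T,
          (if T.card ≤ d then (-1:ℝ)^T.card else 0) := by
    rw [Finset.sum_filter, Finset.sum_filter]
    refine Finset.sum_congr rfl fun T _ => ?_
    by_cases h1 : T.card ≤ d <;> by_cases h2 : U ⊆ T <;> simp [h1, h2]
  rw [key, extrap_sum_supersets Finset.univ U (Finset.subset_univ U)]
  have hdisj : ∀ R ∈ ((Finset.univ : Finset (Fin n)) \ U).powerset, (U ∪ R).card = U.card + R.card := by
    intro R hR
    rw [Finset.mem_powerset, Finset.subset_sdiff] at hR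
    exact Finset.card_union_of_disjoint hR.2.symm
  have step : ∑ R ∈ ((Finset.univ : Finset (Fin n)) \ U).powerset,
        (if (U ∪ R).card ≤ d then (-1:ℝ)^(U ∪ R).card else 0)
      = ∑ R ∈ ((Finset.univ : Finset (Fin n)) \ U).powerset,
        ((-1:ℝ)^U.card * (if R.card ≤ d - U.card then (-1:ℝ)^R.card else 0)) := by
    refine Finset.sum_congr rfl fun R hR => ?_
    rw [hdisj R hR]
    have hiff : U.card + R.card ≤ d ↔ R.card ≤ d - U.card := by omega
    by_cases h : R.card ≤ d - U.card
    · rw [if_pos (hiff.mpr h), if_pos h, pow_add]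
    · rw [if_neg (fun hh => h (hiff.mp hh)), if_neg h, mul_zero]
  rw [step, ← Finset.mul_sum]
  congr 1
  rw [Finset.sum_powerset_apply_card (fun m => if m ≤ d - U.card then (-1:ℝ)^m else 0)]
  have hcard : ((Finset.univ : Finset (Fin n)) \ U).card = n - U.card := by
    rw [Finset.card_sdiff_of_subset (Finset.subset_univ U)]; simp
  rw [hcard]
  have hswap : ∑ m ∈ Finset.range (n - U.card + 1),
        (n - U.card).choose m • (if m ≤ d - U.card then (-1:ℝ)^m else 0)
      = ∑ m ∈ Finset.range (d - U.card + 1), (-1:ℝ)^m * ((n - U.card).choose m) := by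
    have hfil : (Finset.range (n - U.card + 1)).filter (· ≤ d - U.card)
        = Finset.range (d - U.card + 1) := by
      ext m; simp only [Finset.mem_filter, Finset.mem_range]; omega
    rw [← hfil, Finset.sum_filter]
    refine Finset.sum_congr rfl fun m _ => ?_
    by_cases h : m ≤ d - U.card <;> simp [h, nsmul_eq_mul] <;> ring
  rw [hswap]
  have hm1 : n - U.card = (n - U.card - 1) + 1 := by omega
  rw [hm1, alt_partial (n - U.card - 1) (d - U.card)]
  norm_num

private lemma extrap_count {n d : ℕ} (hd : d ≤ n - 1) (hn : 1 ≤ n) :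
    ∑ U ∈ (Finset.univ : Finset (Fin n)).powerset,
      (if U.card ≤ d then ((n - U.card - 1).choose (d - U.card)) else 0) ≤ 2^d * n.choose d := by
  rw [Finset.sum_powerset_apply_card (fun m => if m ≤ d then ((n - m - 1).choose (d - m)) else 0)]
  have hcard : ((Finset.univ : Finset (Fin n))).card = n := by simp
  rw [hcard]
  have h1 : ∑ m ∈ Finset.range (n+1), n.choose m • (if m ≤ d then ((n - m - 1).choose (d - m)) else 0)
      = ∑ m ∈ Finset.range (d+1), n.choose m * (n - m - 1).choose (d - m) := by
    have hfil : (Finset.range (n+1)).filter (· ≤ d) = Finset.range (d+1) := by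
      ext m; simp only [Finset.mem_filter, Finset.mem_range]; omega
    rw [← hfil, Finset.sum_filter]
    refine Finset.sum_congr rfl fun m _ => ?_
    by_cases h : m ≤ d <;> simp [h]
  rw [h1]
  calc ∑ m ∈ Finset.range (d+1), n.choose m * (n - m - 1).choose (d - m)
      ≤ ∑ m ∈ Finset.range (d+1), n.choose m * (n - m).choose (d - m) := by
        refine Finset.sum_le_sum fun m _ => ?_
        exact Nat.mul_le_mul_left _ (Nat.choose_le_choose _ (by omega))
    _ = ∑ m ∈ Finset.range (d+1), n.choose d * d.choose m := by
        refine Finset.sum_congr rfl fun m hm => ?_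
        rw [Finset.mem_range] at hm
        rw [← Nat.choose_mul (by omega : m ≤ d)]
    _ = n.choose d * 2^d := by rw [← Finset.mul_sum, Nat.sum_range_choose]
    _ = 2^d * n.choose d := by ring

/-- Extrapolation lemma: if `0 ≤ d ≤ n−1` and `φ : ℝⁿ → ℝ` has total degree at most `d`,
then `|φ(1ⁿ)| ≤ 2^d · C(n,d) · max_{x ∈ {0,1}ⁿ, |x| ≤ d} |φ(x)|`. -/
theorem extrapolation_lemma (n d : ℕ) (hdn : d ≤ n - 1) (hn : 1 ≤ n)
    (φ : MvPolynomial (Fin n) ℝ) (hdeg : φ.totalDegree ≤ d) :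
    |MvPolynomial.eval (fun _ => (1 : ℝ)) φ| ≤
      2 ^ d * (n.choose d) *
        ((Finset.univ.filter
            (fun b : Fin n → Bool => (Finset.univ.filter (fun i => b i)).card ≤ d)).sup'
          ⟨fun _ => false, by simp⟩
          (fun b => |MvPolynomial.eval (fun i => if b i then (1 : ℝ) else 0) φ|)) := by
  classical
  set f : Finset (Fin n) → ℝ :=
    fun U => MvPolynomial.eval (fun i => if i ∈ U then (1:ℝ) else 0) φ with hf
  set M : ℝ :=
    (Finset.univ.filter
        (fun b : Fin n → Bool => (Finset.univ.filter (fun i => b i)).card ≤ d)).sup'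
      ⟨fun _ => false, by simp⟩
      (fun b => |MvPolynomial.eval (fun i => if b i then (1 : ℝ) else 0) φ|) with hMdef
  -- |f U| ≤ M for small U
  have hM : ∀ U : Finset (Fin n), U.card ≤ d → |f U| ≤ M := by
    intro U hU
    have hbmem : (fun i => decide (i ∈ U)) ∈
        Finset.univ.filter
          (fun b : Fin n → Bool => (Finset.univ.filter (fun i => b i)).card ≤ d) := by
      simp only [Finset.mem_filter, Finset.mem_univ, true_and]
      have : Finset.univ.filter (fun i => decide (i ∈ U) = true) = U := by
        ext i; simp
      simpa [this] using hU
    have hle := Finset.le_sup' (f := fun b : Fin n → Bool =>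
      |MvPolynomial.eval (fun i => if b i then (1 : ℝ) else 0) φ|) hbmem
    have heq : (fun i => if decide (i ∈ U) = true then (1:ℝ) else 0)
        = fun i => if i ∈ U then (1:ℝ) else 0 := by funext i; simp
    rw [hf, hMdef]
    simpa [heq] using hle
  have hM0 : (0:ℝ) ≤ M := by
    have hbmem : (fun _ : Fin n => false) ∈
        Finset.univ.filter
          (fun b : Fin n → Bool => (Finset.univ.filter (fun i => b i)).card ≤ d) := by
      simp
    rw [hMdef]
    have := Finset.le_sup' (f := fun b : Fin n → Bool =>
      |MvPolynomial.eval (fun i => if b i then (1 : ℝ) else 0) φ|) hbmem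
    exact le_trans (abs_nonneg _) this
  -- φ(1ⁿ) = f univ
  have h1 : MvPolynomial.eval (fun _ => (1 : ℝ)) φ = f Finset.univ := by
    have heq : (fun _ : Fin n => (1:ℝ)) = fun i => if i ∈ (Finset.univ : Finset (Fin n)) then (1:ℝ) else 0 := by
      funext i; simp
    rw [hf, heq]
  -- Möbius decomposition
  have hmob := extrap_mobius f
  set P := (Finset.univ : Finset (Fin n)).powerset with hP
  -- drop big T
  have hsplit : f Finset.univ = ∑ T ∈ P with T.card ≤ d,
      (-1:ℝ)^T.card * ∑ U ∈ T.powerset, (-1:ℝ)^U.card * f U := by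
    rw [hmob, ← Finset.sum_filter_add_sum_filter_not P (fun T => T.card ≤ d)]
    have hz : ∑ T ∈ P with ¬ T.card ≤ d,
        (-1:ℝ)^T.card * ∑ U ∈ T.powerset, (-1:ℝ)^U.card * f U = 0 := by
      refine Finset.sum_eq_zero fun T hT => ?_
      rw [Finset.mem_filter] at hT
      have hv := extrap_vanish φ hdeg T (by omega)
      rw [hf]
      simp only [hf] at hv ⊢
      rw [hv, mul_zero]
    rw [hz, add_zero]
  -- swap sums to get coefficients
  have hswap : f Finset.univ = ∑ U ∈ P,
      ((-1:ℝ)^U.card * f U) * (∑ T ∈ P with (T.card ≤ d ∧ U ⊆ T), (-1:ℝ)^T.card) := by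
    rw [hsplit]
    have step : ∀ T ∈ P.filter (fun T => T.card ≤ d),
        (-1:ℝ)^T.card * ∑ U ∈ T.powerset, (-1:ℝ)^U.card * f U
        = ∑ U ∈ P, (if U ⊆ T then (-1:ℝ)^T.card * ((-1:ℝ)^U.card * f U) else 0) := by
      intro T _
      rw [extrap_powerset_eq T, ← hP, Finset.sum_filter, Finset.mul_sum]
      refine Finset.sum_congr rfl fun U _ => ?_
      by_cases h : U ⊆ T <;> simp [h]
    rw [Finset.sum_congr rfl step, Finset.sum_comm]
    refine Finset.sum_congr rfl fun U _ => ?_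
    have hff : P.filter (fun T => T.card ≤ d ∧ U ⊆ T)
        = (P.filter (fun T => T.card ≤ d)).filter (fun T => U ⊆ T) := by
      rw [Finset.filter_filter]
    rw [hff, Finset.sum_filter (s := P.filter (fun T => T.card ≤ d)), Finset.mul_sum]
    refine Finset.sum_congr rfl fun T _ => ?_
    by_cases h : U ⊆ T <;> simp [h] <;> ring
  -- bound
  rw [h1, hswap]
  have hbound : ∀ U ∈ P,
      |((-1:ℝ)^U.card * f U) * (∑ T ∈ P with (T.card ≤ d ∧ U ⊆ T), (-1:ℝ)^T.card)|
      ≤ (if U.card ≤ d then (((n - U.card - 1).choose (d - U.card)) : ℝ) else 0) * M := by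
    intro U _
    by_cases hU : U.card ≤ d
    · rw [if_pos hU, extrap_coeff U hU hdn hn]
      rw [abs_mul, abs_mul, abs_mul, abs_mul]
      simp only [abs_pow, abs_neg, abs_one, one_pow, one_mul]
      rw [Nat.abs_cast]
      rw [mul_comm (|f U|)]
      exact mul_le_mul_of_nonneg_left (hM U hU) (Nat.cast_nonneg _)
    · rw [if_neg hU]
      have hempty : P.filter (fun T => T.card ≤ d ∧ U ⊆ T) = ∅ := by
        refine Finset.filter_false_of_mem fun T hT => ?_
        rintro ⟨h1', h2'⟩
        exact hU (le_trans (Finset.card_le_card h2') h1')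
      rw [hempty, Finset.sum_empty, mul_zero, abs_zero, zero_mul]
  calc |∑ U ∈ P, ((-1:ℝ)^U.card * f U) * (∑ T ∈ P with (T.card ≤ d ∧ U ⊆ T), (-1:ℝ)^T.card)|
      ≤ ∑ U ∈ P, |((-1:ℝ)^U.card * f U) * (∑ T ∈ P with (T.card ≤ d ∧ U ⊆ T), (-1:ℝ)^T.card)| :=
        Finset.abs_sum_le_sum_abs _ _
    _ ≤ ∑ U ∈ P, (if U.card ≤ d then (((n - U.card - 1).choose (d - U.card)) : ℝ) else 0) * M :=
        Finset.sum_le_sum hbound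
    _ = (∑ U ∈ P, (if U.card ≤ d then (((n - U.card - 1).choose (d - U.card)) : ℝ) else 0)) * M := by
        rw [Finset.sum_mul]
    _ ≤ (2^d * (n.choose d) : ℝ) * M := by
        refine mul_le_mul_of_nonneg_right ?_ hM0
        have := extrap_count (n := n) (d := d) hdn hn
        have hcast : (∑ U ∈ P, (if U.card ≤ d then (((n - U.card - 1).choose (d - U.card)) : ℝ) else 0))
            = ((∑ U ∈ P, (if U.card ≤ d then ((n - U.card - 1).choose (d - U.card)) else 0) : ℕ) : ℝ) := by
          push_cast
          refine Finset.sum_congr rfl fun U _ => ?_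
          by_cases h : U.card ≤ d <;> simp [h]
        rw [hcast]
        calc ((∑ U ∈ P, (if U.card ≤ d then ((n - U.card - 1).choose (d - U.card)) else 0) : ℕ) : ℝ)
            ≤ ((2^d * n.choose d : ℕ) : ℝ) := by exact_mod_cast this
          _ = (2^d * (n.choose d) : ℝ) := by push_cast; ring
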